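/- Given five points W₁,…,W₅, all on distinct sides or the same side of a segment UV, with all ten segments UWᵢ, VWᵢ pairwise non-crossing (a planar straight-line drawing of the 2-tree obtained by adding five simplicial vertices to edge UV), at least three of the five triangles UVWᵢ lie on the same side of the line UV, and among any three non-crossing triangles sharing edge UV on the same side of line UV, one contains the other two in its closed region. -/

import Mathlib

noncomputable def triDet (A B C : EuclideanSpace ℝ (Fin 2)) : ℝ :=
  (B 0 - A 0) * (C 1 - A 1) - (B 1 - A 1) * (C 0 - A 0)

lemma mem_hull3 (U V A B : EuclideanSpace ℝ (Fin 2)) (a b c : ℝ)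
    (ha : 0 ≤ a) (hb : 0 ≤ b) (hc : 0 ≤ c) (hs : a + b + c = 1)
    (hB : B = a • U + b • V + c • A) :
    B ∈ convexHull ℝ ({U, V, A} : Set (EuclideanSpace ℝ (Fin 2))) := by
  by_cases h : b + c = 0
  · have hb0 : b = 0 := le_antisymm (by linarith) hb
    have hc0 : c = 0 := le_antisymm (by linarith) hc
    have ha1 : a = 1 := by linarith
    have : B = U := by rw [hB, ha1, hb0, hc0]; simp
    exact this ▸ subset_convexHull ℝ _ (by simp)
  · have ht : 0 < b + c := lt_of_le_of_ne (by linarith) (Ne.symm h)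
    set z : EuclideanSpace ℝ (Fin 2) := (b / (b + c)) • V + (c / (b + c)) • A with hz
    have hzseg : z ∈ segment ℝ V A :=
      ⟨b / (b + c), c / (b + c), div_nonneg hb ht.le, div_nonneg hc ht.le,
        by field_simp, rfl⟩
    have hzmem : z ∈ convexHull ℝ ({U, V, A} : Set (EuclideanSpace ℝ (Fin 2))) :=
      segment_subset_convexHull (by simp) (by simp) hzseg
    have hUmem : U ∈ convexHull ℝ ({U, V, A} : Set (EuclideanSpace ℝ (Fin 2))) :=
      subset_convexHull ℝ _ (by simp)
    have hBseg : B ∈ segment ℝ U z := by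
      refine ⟨a, b + c, ha, ht.le, by linarith, ?_⟩
      rw [hB, hz]
      match_scalars <;> field_simp
    exact (convex_convexHull ℝ _).segment_subset hUmem hzmem hBseg

lemma key' (U V A B : EuclideanSpace ℝ (Fin 2)) (a b c : ℝ)
    (hc : 0 < c) (hsum : a + b + c = 1) (hB : B = a • U + b • V + c • A)
    (h1 : openSegment ℝ U A ∩ openSegment ℝ U B = ∅)
    (h2 : openSegment ℝ U A ∩ openSegment ℝ V B = ∅)
    (h3 : openSegment ℝ V A ∩ openSegment ℝ U B = ∅)
    (h4 : openSegment ℝ V A ∩ openSegment ℝ V B = ∅) :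
    B ∈ convexHull ℝ ({U, V, A} : Set (EuclideanSpace ℝ (Fin 2))) ∨
      A ∈ convexHull ℝ ({U, V, B} : Set (EuclideanSpace ℝ (Fin 2))) := by
  have hc0 : c ≠ 0 := ne_of_gt hc
  rcases le_or_gt 0 a with hA0 | hA0 <;> rcases le_or_gt 0 b with hB0 | hB0
  · exact Or.inl (mem_hull3 U V A B a b c hA0 hB0 hc.le hsum hB)
  · -- 0 ≤ a, b < 0
    exfalso
    rcases eq_or_lt_of_le hA0 with ha0 | ha0
    · have hbc : b = 1 - c := by linarith
      subst hbc
      have hM1 : (1/2 : ℝ) • V + (1/2 : ℝ) • A ∈ openSegment ℝ V A :=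
        ⟨1/2, 1/2, by norm_num, by norm_num, by norm_num, rfl⟩
      have hM2 : (1/2 : ℝ) • V + (1/2 : ℝ) • A ∈ openSegment ℝ V B := by
        refine ⟨(c - (1 - c)) / (2 * c), 1 / (2 * c), ?_, by positivity, ?_, ?_⟩
        · exact div_pos (by linarith) (by linarith)
        · field_simp; ring
        · rw [hB, ← ha0]
          match_scalars <;> field_simp <;> ring
      have := h4 ▸ Set.mem_inter hM1 hM2
      simp at this
    · have hb1 : 0 < 1 - b := by linarith
      have hb1' : (1 : ℝ) - b ≠ 0 := ne_of_gt hb1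
      set s : ℝ := 1 / (1 - b) with hs
      have hs0 : 0 < s := by positivity
      have hs1 : s < 1 := by rw [hs, div_lt_one hb1]; linarith
      have hP2 : (1 - s) • V + s • B ∈ openSegment ℝ V B :=
        ⟨1 - s, s, by linarith, hs0, by ring, rfl⟩
      have hP1 : (1 - s) • V + s • B ∈ openSegment ℝ U A := by
        refine ⟨s * a, s * c, by positivity, by positivity, ?_, ?_⟩
        · rw [hs]; field_simp; linarith
        · rw [hB]
          match_scalars <;> rw [hs] <;> field_simp <;> ring
      have := h2 ▸ Set.mem_inter hP1 hP2
      simp at this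
  · -- a < 0, 0 ≤ b
    exfalso
    rcases eq_or_lt_of_le hB0 with hb0 | hb0
    · have hac : a = 1 - c := by linarith
      subst hac
      have hM1 : (1/2 : ℝ) • U + (1/2 : ℝ) • A ∈ openSegment ℝ U A :=
        ⟨1/2, 1/2, by norm_num, by norm_num, by norm_num, rfl⟩
      have hM2 : (1/2 : ℝ) • U + (1/2 : ℝ) • A ∈ openSegment ℝ U B := by
        refine ⟨(c - (1 - c)) / (2 * c), 1 / (2 * c), ?_, by positivity, ?_, ?_⟩
        · exact div_pos (by linarith) (by linarith)
        · field_simp; ring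
        · rw [hB, ← hb0]
          match_scalars <;> field_simp <;> ring
      have := h1 ▸ Set.mem_inter hM1 hM2
      simp at this
    · have ha1 : 0 < 1 - a := by linarith
      have ha1' : (1 : ℝ) - a ≠ 0 := ne_of_gt ha1
      set t : ℝ := 1 / (1 - a) with ht
      have ht0 : 0 < t := by positivity
      have ht1 : t < 1 := by rw [ht, div_lt_one ha1]; linarith
      have hP2 : (1 - t) • U + t • B ∈ openSegment ℝ U B :=
        ⟨1 - t, t, by linarith, ht0, by ring, rfl⟩
      have hP1 : (1 - t) • U + t • B ∈ openSegment ℝ V A := by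
        refine ⟨t * b, t * c, by positivity, by positivity, ?_, ?_⟩
        · rw [ht]; field_simp; linarith
        · rw [hB]
          match_scalars <;> rw [ht] <;> field_simp <;> ring
      have := h3 ▸ Set.mem_inter hP1 hP2
      simp at this
  · -- a < 0, b < 0
    right
    refine mem_hull3 U V B A (-a/c) (-b/c) (1/c)
      (div_nonneg (by linarith) hc.le) (div_nonneg (by linarith) hc.le)
      (by positivity) ?_ ?_
    · rw [← add_div, ← add_div, div_eq_one_iff_eq hc0]; linarith
    · rw [hB]; match_scalars <;> field_simp <;> ring

lemma key (U V A B : EuclideanSpace ℝ (Fin 2)) (hA : triDet U V A ≠ 0)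
    (hside : 0 < triDet U V A * triDet U V B)
    (h1 : openSegment ℝ U A ∩ openSegment ℝ U B = ∅)
    (h2 : openSegment ℝ U A ∩ openSegment ℝ V B = ∅)
    (h3 : openSegment ℝ V A ∩ openSegment ℝ U B = ∅)
    (h4 : openSegment ℝ V A ∩ openSegment ℝ V B = ∅) :
    B ∈ convexHull ℝ ({U, V, A} : Set (EuclideanSpace ℝ (Fin 2))) ∨
      A ∈ convexHull ℝ ({U, V, B} : Set (EuclideanSpace ℝ (Fin 2))) := by
  set d := triDet U V A with hd
  refine key' U V A B (triDet B V A / d) (triDet U B A / d) (triDet U V B / d) ?_ ?_ ?_ h1 h2 h3 h4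
  · rcases mul_pos_iff.mp hside with ⟨p, q⟩ | ⟨p, q⟩
    · exact div_pos q p
    · exact div_pos_of_neg_of_neg q p
  · rw [← add_div, ← add_div, div_eq_one_iff_eq hA]
    simp only [hd, triDet]; ring
  · have cram : ∀ i : Fin 2,
        triDet U V A * B i = triDet B V A * U i + triDet U B A * V i + triDet U V B * A i := by
      intro i; fin_cases i <;> simp [triDet] <;> ring
    ext i
    have h := cram i
    simp only [PiLp.add_apply, PiLp.smul_apply, smul_eq_mul]
    field_simp
    linarith [h]

lemma hull_trans (U V A B C : EuclideanSpace ℝ (Fin 2))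
    (h1 : A ∈ convexHull ℝ ({U, V, B} : Set (EuclideanSpace ℝ (Fin 2))))
    (h2 : C ∈ convexHull ℝ ({U, V, A} : Set (EuclideanSpace ℝ (Fin 2)))) :
    C ∈ convexHull ℝ ({U, V, B} : Set (EuclideanSpace ℝ (Fin 2))) := by
  have : ({U, V, A} : Set (EuclideanSpace ℝ (Fin 2))) ⊆
      convexHull ℝ ({U, V, B} : Set (EuclideanSpace ℝ (Fin 2))) := by
    intro x hx
    rcases hx with rfl | rfl | rfl
    · exact subset_convexHull ℝ _ (by simp)
    · exact subset_convexHull ℝ _ (by simp)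
    · exact h1
  exact convexHull_min this (convex_convexHull ℝ _) h2

theorem stmt_12 (U V : EuclideanSpace ℝ (Fin 2)) (W : Fin 5 → EuclideanSpace ℝ (Fin 2))
    (hUV : U ≠ V)
    (hW : ∀ i, triDet U V (W i) ≠ 0)
    (hcross : ∀ i j, i ≠ j →
      (openSegment ℝ U (W i) ∩ openSegment ℝ U (W j) = ∅) ∧
      (openSegment ℝ U (W i) ∩ openSegment ℝ V (W j) = ∅) ∧
      (openSegment ℝ V (W i) ∩ openSegment ℝ U (W j) = ∅) ∧
      (openSegment ℝ V (W i) ∩ openSegment ℝ V (W j) = ∅)) :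
    ∃ i j k : Fin 5, i ≠ j ∧ i ≠ k ∧ j ≠ k ∧
      0 < triDet U V (W i) * triDet U V (W j) ∧
      0 < triDet U V (W i) * triDet U V (W k) ∧
      W j ∈ convexHull ℝ ({U, V, W i} : Set (EuclideanSpace ℝ (Fin 2))) ∧
      W k ∈ convexHull ℝ ({U, V, W i} : Set (EuclideanSpace ℝ (Fin 2))) := by
  -- pigeonhole: three indices with same sign
  classical
  set t : Fin 5 → ℝ := fun i => triDet U V (W i) with ht
  set P : Finset (Fin 5) := Finset.univ.filter (fun i => 0 < t i) with hP
  set N : Finset (Fin 5) := Finset.univ.filter (fun i => t i < 0) with hN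
  have hcard : P.card + N.card = 5 := by
    have hNeq : N = Finset.univ.filter (fun i => ¬ 0 < t i) := by
      ext i
      simp only [hN, Finset.mem_filter, Finset.mem_univ, true_and, not_lt]
      exact ⟨fun h => h.le, fun h => lt_of_le_of_ne h (by simpa [ht] using hW i)⟩
    rw [hNeq, hP, Finset.card_filter_add_card_filter_not]
    simp
  have hex : ∃ S : Finset (Fin 5), 2 < S.card ∧
      (∀ x ∈ S, ∀ y ∈ S, 0 < t x * t y) := by
    rcases le_or_gt 3 P.card with h | h
    · refine ⟨P, by omega, ?_⟩
      intro x hx y hy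
      rw [hP] at hx hy
      exact mul_pos (Finset.mem_filter.mp hx).2 (Finset.mem_filter.mp hy).2
    · refine ⟨N, by omega, ?_⟩
      intro x hx y hy
      rw [hN] at hx hy
      exact mul_pos_of_neg_of_neg (Finset.mem_filter.mp hx).2 (Finset.mem_filter.mp hy).2
  obtain ⟨S, hS, hsame⟩ := hex
  obtain ⟨a, ha, b, hb, c, hcS, hab, hac, hbc⟩ := Finset.two_lt_card.mp hS
  -- pairwise comparability
  have comp : ∀ x y : Fin 5, x ≠ y → 0 < t x * t y →
      (W y ∈ convexHull ℝ ({U, V, W x} : Set (EuclideanSpace ℝ (Fin 2))) ∨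
       W x ∈ convexHull ℝ ({U, V, W y} : Set (EuclideanSpace ℝ (Fin 2)))) := by
    intro x y hxy hside
    obtain ⟨c1, c2, c3, c4⟩ := hcross x y hxy
    exact key U V (W x) (W y) (hW x) hside c1 c2 c3 c4
  rcases comp a b hab (hsame a ha b hb) with h1 | h1
  · rcases comp a c hac (hsame a ha c hcS) with h2 | h2
    · exact ⟨a, b, c, hab, hac, hbc, hsame a ha b hb, hsame a ha c hcS, h1, h2⟩
    · -- a ∈ hull c, b ∈ hull a ⊆ hull c
      exact ⟨c, a, b, hac.symm, hbc.symm, hab, hsame c hcS a ha, hsame c hcS b hb,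
        h2, hull_trans U V (W a) (W c) (W b) h2 h1⟩
  · rcases comp b c hbc (hsame b hb c hcS) with h2 | h2
    · exact ⟨b, a, c, hab.symm, hbc, hac, hsame b hb a ha, hsame b hb c hcS, h1, h2⟩
    · exact ⟨c, a, b, hac.symm, hbc.symm, hab, hsame c hcS a ha, hsame c hcS b hb,
        hull_trans U V (W b) (W c) (W a) h2 h1, h2⟩
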